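/- For the rule-A vector fields Z₁, Z₂, Z₃ on ℝ⁶, the determinant of the 6×6 matrix whose columns are, in this order, Z₁(m), Z₂(m), Z₃(m), [Z₁,Z₂](m), [Z₃,Z₁](m), [Z₂,Z₃](m), expressed in the standard basis ordered as (∂_{x₁}, ∂_{y₁}, ∂_{x₂}, ∂_{y₂}, ∂_{x₃}, ∂_{y₃}), equals F(m)³ where F(m) = Σ_{i=1}^{3} (yᵢ x_{i+1} − xᵢ y_{i+1}). In particular these six vectors are linearly independent at m if and only if F(m) ≠ 0. -/

import Mathlib

set_option maxHeartbeats 2000000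
set_option maxRecDepth 20000

def xc (i : Fin 3) : Fin 6 := ⟨2 * i.val, by have := i.isLt; omega⟩

def yc (i : Fin 3) : Fin 6 := ⟨2 * i.val + 1, by have := i.isLt; omega⟩

noncomputable def lieBracket (V W : (Fin 6 → ℝ) → (Fin 6 → ℝ)) :
    (Fin 6 → ℝ) → (Fin 6 → ℝ) :=
  fun m => fderiv ℝ W m (V m) - fderiv ℝ V m (W m)

/-- Rule-A vector fields. -/
def ZA (i : Fin 3) (m : Fin 6 → ℝ) : Fin 6 → ℝ := fun j =>
  if j = xc i then m (xc (i + 1)) - m (xc i)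
  else if j = yc i then m (yc (i + 1)) - m (yc i)
  else 0

/-- Twice 16 times the signed area: `F(m) = Σᵢ (yᵢ x_{i+1} − xᵢ y_{i+1})`. -/
def F (m : Fin 6 → ℝ) : ℝ :=
  ∑ i : Fin 3, (m (yc i) * m (xc (i + 1)) - m (xc i) * m (yc (i + 1)))

/-- The six vectors `Z₁(m), Z₂(m), Z₃(m), [Z₁,Z₂](m), [Z₃,Z₁](m), [Z₂,Z₃](m)`. -/
noncomputable def cols (m : Fin 6 → ℝ) : Fin 6 → (Fin 6 → ℝ) :=
  ![ZA 0 m, ZA 1 m, ZA 2 m,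
    lieBracket (ZA 0) (ZA 1) m, lieBracket (ZA 2) (ZA 0) m, lieBracket (ZA 1) (ZA 2) m]

/-- `ZA i` as a linear map. -/
def Lz (i : Fin 3) : (Fin 6 → ℝ) →ₗ[ℝ] (Fin 6 → ℝ) where
  toFun := ZA i
  map_add' a b := by funext j; simp only [ZA, Pi.add_apply]; split_ifs <;> ring
  map_smul' c a := by
    funext j; simp only [ZA, Pi.smul_apply, RingHom.id_apply, smul_eq_mul]
    split_ifs <;> ring

lemma fderiv_ZA (i : Fin 3) (m : Fin 6 → ℝ) :
    fderiv ℝ (ZA i) m = (Lz i).toContinuousLinearMap := by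
  have : ZA i = ⇑(Lz i).toContinuousLinearMap := rfl
  rw [this, ContinuousLinearMap.fderiv]

lemma bracket_ZA (i j : Fin 3) (m : Fin 6 → ℝ) :
    lieBracket (ZA i) (ZA j) m = ZA j (ZA i m) - ZA i (ZA j m) := by
  simp [lieBracket, fderiv_ZA]; rfl

lemma ZA0_eq (m : Fin 6 → ℝ) : ZA 0 m = ![m 2 - m 0, m 3 - m 1, 0, 0, 0, 0] := by
  funext j; fin_cases j <;> simp only [ZA] <;> norm_num [yc, xc, Fin.ext_iff] <;> rfl

lemma ZA1_eq (m : Fin 6 → ℝ) : ZA 1 m = ![0, 0, m 4 - m 2, m 5 - m 3, 0, 0] := by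
  funext j; fin_cases j <;> simp only [ZA] <;> norm_num [yc, xc, Fin.ext_iff] <;> rfl

lemma ZA2_eq (m : Fin 6 → ℝ) : ZA 2 m = ![0, 0, 0, 0, m 0 - m 4, m 1 - m 5] := by
  funext j; fin_cases j <;> simp only [ZA] <;> norm_num [yc, xc, Fin.ext_iff] <;> rfl

lemma vec6_val (a b c d e f : ℝ) :
    (![a, b, c, d, e, f] : Fin 6 → ℝ) 0 = a ∧ (![a, b, c, d, e, f] : Fin 6 → ℝ) 1 = b ∧
    (![a, b, c, d, e, f] : Fin 6 → ℝ) 2 = c ∧ (![a, b, c, d, e, f] : Fin 6 → ℝ) 3 = d ∧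
    (![a, b, c, d, e, f] : Fin 6 → ℝ) 4 = e ∧ (![a, b, c, d, e, f] : Fin 6 → ℝ) 5 = f :=
  ⟨rfl, rfl, rfl, rfl, rfl, rfl⟩

lemma b01_eq (m : Fin 6 → ℝ) :
    lieBracket (ZA 0) (ZA 1) m = ![m 2 - m 4, m 3 - m 5, 0, 0, 0, 0] := by
  rw [bracket_ZA]
  rw [ZA1_eq (ZA 0 m), ZA0_eq (ZA 1 m), ZA0_eq, ZA1_eq]
  funext j; fin_cases j <;> norm_num [vec6_val]

lemma b20_eq (m : Fin 6 → ℝ) :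
    lieBracket (ZA 2) (ZA 0) m = ![0, 0, 0, 0, m 0 - m 2, m 1 - m 3] := by
  rw [bracket_ZA]
  rw [ZA0_eq (ZA 2 m), ZA2_eq (ZA 0 m), ZA2_eq, ZA0_eq]
  funext j; fin_cases j <;> norm_num [vec6_val]

lemma b12_eq (m : Fin 6 → ℝ) :
    lieBracket (ZA 1) (ZA 2) m = ![0, 0, m 4 - m 0, m 5 - m 1, 0, 0] := by
  rw [bracket_ZA]
  rw [ZA2_eq (ZA 1 m), ZA1_eq (ZA 2 m), ZA1_eq, ZA2_eq]
  funext j; fin_cases j <;> norm_num [vec6_val]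

lemma F_eq (m : Fin 6 → ℝ) :
    F m = m 1 * m 2 - m 0 * m 3 + (m 3 * m 4 - m 2 * m 5) + (m 5 * m 0 - m 4 * m 1) := by
  rw [F, Fin.sum_univ_three]
  norm_num [xc, yc] <;> rfl

lemma det6 (a b c d e f g h i j k l : ℝ) :
    (!![a, 0, 0, b, 0, 0;
        c, 0, 0, d, 0, 0;
        0, e, 0, 0, 0, f;
        0, g, 0, 0, 0, h;
        0, 0, i, 0, j, 0;
        0, 0, k, 0, l, 0]).det
      = (a * d - b * c) * (e * h - f * g) * (i * l - j * k) := by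
  simp only [Matrix.det_succ_row_zero, Fin.sum_univ_succ, Matrix.submatrix_apply,
    Matrix.submatrix_submatrix, Function.comp_apply, Matrix.cons_val', Matrix.cons_val_zero,
    Matrix.cons_val_one, Matrix.head_cons, Matrix.head_fin_const, Matrix.cons_val_fin_one,
    Matrix.empty_val', Matrix.cons_val_succ, Fin.succ_zero_eq_one, Fin.succ_one_eq_two,
    Fin.zero_succAbove, Fin.succ_succAbove_zero, Fin.succ_succAbove_succ,
    Matrix.det_unique, Fin.default_eq_zero, Finset.univ_unique, Finset.sum_singleton,
    Fin.val_zero, Fin.val_succ, Matrix.of_apply, Matrix.cons_val_two, Matrix.cons_val_three,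
    Matrix.cons_val_four, Matrix.vecTail, Matrix.vecHead,
    zero_mul, mul_zero, zero_add, add_zero, neg_zero, one_mul, mul_one, neg_neg, mul_neg, neg_mul,
    pow_succ, pow_zero]
  norm_num [Fin.succAbove, Fin.lt_def, Fin.castSucc, Fin.castAdd, Fin.castLE]
  simp only [Matrix.cons_val_two, Matrix.vecHead, Matrix.vecTail, Function.comp_apply,
    Fin.succ_zero_eq_one, Matrix.cons_val_zero, Matrix.cons_val_one, Matrix.cons_val_succ]
  ring

theorem ruleA_det_eq_area_cubed (m : Fin 6 → ℝ) :
    (Matrix.of fun r c : Fin 6 => cols m c r).det = (F m) ^ 3 ∧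
    (LinearIndependent ℝ (cols m) ↔ F m ≠ 0) := by
  have hM : (Matrix.of fun r c : Fin 6 => cols m c r) =
      !![m 2 - m 0, 0, 0, m 2 - m 4, 0, 0;
         m 3 - m 1, 0, 0, m 3 - m 5, 0, 0;
         0, m 4 - m 2, 0, 0, 0, m 4 - m 0;
         0, m 5 - m 3, 0, 0, 0, m 5 - m 1;
         0, 0, m 0 - m 4, 0, m 0 - m 2, 0;
         0, 0, m 1 - m 5, 0, m 1 - m 3, 0] := by
    funext r c
    rw [Matrix.of_apply]
    fin_cases c <;>
      simp only [cols, ZA0_eq, ZA1_eq, ZA2_eq, b01_eq, b20_eq, b12_eq,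
        Matrix.cons_val_zero, Matrix.cons_val_one, Matrix.head_cons] <;>
      fin_cases r <;> norm_num
  have hdet : (Matrix.of fun r c : Fin 6 => cols m c r).det = (F m) ^ 3 := by
    rw [hM, det6, F_eq]; ring
  refine ⟨hdet, ?_⟩
  set A := (Matrix.of fun r c : Fin 6 => cols m c r) with hA
  have hcols : cols m = fun i => A.transpose i := by funext i j; rfl
  rw [hcols, show (fun i => A.transpose i) = A.transpose.row from rfl,
    Matrix.linearIndependent_rows_iff_isUnit, ← Matrix.isUnit_transpose,
    Matrix.transpose_transpose, Matrix.isUnit_iff_isUnit_det, isUnit_iff_ne_zero, hdet]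
  constructor
  · intro h hF; exact h (by rw [hF]; ring)
  · intro h; exact pow_ne_zero _ h
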